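/- The metric g = dy₁² + dy₂² + (y₁ dy₂ + dy₃)² on ℝ³ (the geometry Nil) is an expanding Ricci soliton with soliton flow E = −y₁ ∂/∂y₁ − y₂ ∂/∂y₂ − 2y₃ ∂/∂y₃: that is, −2 Ricci(g) = L_E g + 2Ag holds for some positive constant A. Moreover this soliton is not of gradient type, since dE♭ = −2(y₁y₂+y₃) dy₁∧dy₂ − y₂ dy₁∧dy₃ + y₁ dy₂∧dy₃ ≠ 0. -/

import Mathlib

open scoped BigOperators

noncomputable section

/-- Partial derivative of `f` in the `i`-th coordinate direction. -/
def pd {n : ℕ} (f : (Fin n → ℝ) → ℝ) (i : Fin n) (x : Fin n → ℝ) : ℝ :=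
  fderiv ℝ f x (Pi.single i 1)

/-- Pointwise inverse of a metric (the components `g^{ij}`). -/
def ginv {n : ℕ} (g : (Fin n → ℝ) → Matrix (Fin n) (Fin n) ℝ) (x : Fin n → ℝ) :
    Matrix (Fin n) (Fin n) ℝ := (g x)⁻¹

/-- Christoffel symbols `Γ^k_{ij}` of the metric `g`. -/
def christoffel {n : ℕ} (g : (Fin n → ℝ) → Matrix (Fin n) (Fin n) ℝ)
    (k i j : Fin n) (x : Fin n → ℝ) : ℝ :=
  (1 / 2) * ∑ l, ginv g x k l *
    (pd (fun y => g y l j) i x + pd (fun y => g y l i) j x - pd (fun y => g y i j) l x)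

/-- The Ricci tensor in coordinates:
`Ric_{ij} = ∂_k Γ^k_{ij} − ∂_i Γ^k_{kj} + Γ^k_{kl} Γ^l_{ij} − Γ^k_{il} Γ^l_{kj}`. -/
def ricci {n : ℕ} (g : (Fin n → ℝ) → Matrix (Fin n) (Fin n) ℝ)
    (i j : Fin n) (x : Fin n → ℝ) : ℝ :=
  (∑ k, pd (christoffel g k i j) k x) - (∑ k, pd (christoffel g k k j) i x)
    + (∑ k, ∑ l, christoffel g k k l x * christoffel g l i j x)
    - ∑ k, ∑ l, christoffel g k i l x * christoffel g l k j x

/-- Lie derivative of the metric: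
`(L_E g)_{ij} = E^k ∂_k g_{ij} + g_{kj} ∂_i E^k + g_{ik} ∂_j E^k`. -/
def lieD {n : ℕ} (g : (Fin n → ℝ) → Matrix (Fin n) (Fin n) ℝ)
    (E : (Fin n → ℝ) → Fin n → ℝ) (i j : Fin n) (x : Fin n → ℝ) : ℝ :=
  (∑ k, E x k * pd (fun y => g y i j) k x)
    + (∑ k, g x k j * pd (fun y => E y k) i x)
    + ∑ k, g x i k * pd (fun y => E y k) j x

/-- The dual 1-form `E♭ = g(E,·)`. -/
def flat {n : ℕ} (g : (Fin n → ℝ) → Matrix (Fin n) (Fin n) ℝ)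
    (E : (Fin n → ℝ) → Fin n → ℝ) (j : Fin n) (x : Fin n → ℝ) : ℝ :=
  ∑ k, g x j k * E x k

/-- The Nil metric `g = dy₁² + dy₂² + (y₁ dy₂ + dy₃)²` on `ℝ³`. -/
def nilMetric (x : Fin 3 → ℝ) : Matrix (Fin 3) (Fin 3) ℝ :=
  Matrix.of fun i j =>
    !![1, 0, 0; 0, 1 + (x 0) ^ 2, x 0; 0, x 0, 1] i j

/-- The soliton flow on Nil: `E = −y₁ ∂/∂y₁ − y₂ ∂/∂y₂ − 2y₃ ∂/∂y₃`. -/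
def nilFlow (x : Fin 3 → ℝ) : Fin 3 → ℝ :=
  ![-(x 0), -(x 1), -(2 * x 2)]

/-! ### Differentiation toolkit -/

/-- A generic polynomial shape covering all functions appearing in the computation. -/
def P (a b c d e f g h : ℝ) : (Fin 3 → ℝ) → ℝ := fun y =>
  a + b * y 0 + c * y 1 + d * y 2 + e * (y 0) ^ 2 + f * (y 0 * y 1) + g * (y 0 * y 2)
    + h * ((y 0) ^ 2 * y 1)

def prj (i : Fin 3) : (Fin 3 → ℝ) →L[ℝ] ℝ := ContinuousLinearMap.proj i

lemma hasP (a b c d e f g h : ℝ) (x : Fin 3 → ℝ) :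
    HasFDerivAt (P a b c d e f g h)
      ((b + 2 * e * x 0 + f * x 1 + g * x 2 + 2 * h * (x 0 * x 1)) • prj 0
        + (c + f * x 0 + h * (x 0) ^ 2) • prj 1 + (d + g * x 0) • prj 2) x := by
  have h0 : HasFDerivAt (fun y : Fin 3 → ℝ => y 0) (prj 0) x := hasFDerivAt_apply 0 x
  have h1 : HasFDerivAt (fun y : Fin 3 → ℝ => y 1) (prj 1) x := hasFDerivAt_apply 1 x
  have h2 : HasFDerivAt (fun y : Fin 3 → ℝ => y 2) (prj 2) x := hasFDerivAt_apply 2 x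
  have H := ((((((h0.const_mul b).const_add a).add ((h1.const_mul c))).add
      (h2.const_mul d)).add ((h0.mul h0).const_mul e)).add
      ((h0.mul h1).const_mul f)).add ((h0.mul h2).const_mul g)
  have H2 := H.add (((h0.mul h0).mul h1).const_mul h)
  convert H2 using 1
  all_goals try rfl
  · ext y; simp [P]; ring
  · ext v
    simp [ContinuousLinearMap.smul_apply, ContinuousLinearMap.add_apply, prj]
    ring

lemma pdP0 (a b c d e f g h : ℝ) (x : Fin 3 → ℝ) :
    pd (P a b c d e f g h) 0 x
      = b + 2 * e * x 0 + f * x 1 + g * x 2 + 2 * h * (x 0 * x 1) := by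
  rw [pd, (hasP a b c d e f g h x).fderiv]; simp [prj, Pi.single_apply]

lemma pdP1 (a b c d e f g h : ℝ) (x : Fin 3 → ℝ) :
    pd (P a b c d e f g h) 1 x = c + f * x 0 + h * (x 0) ^ 2 := by
  rw [pd, (hasP a b c d e f g h x).fderiv]; simp [prj, Pi.single_apply]

lemma pdP2 (a b c d e f g h : ℝ) (x : Fin 3 → ℝ) :
    pd (P a b c d e f g h) 2 x = d + g * x 0 := by
  rw [pd, (hasP a b c d e f g h x).fderiv]; simp [prj, Pi.single_apply]

/-! ### Metric entries as `P`-polynomials -/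

lemma mf00 : (fun y : Fin 3 → ℝ => nilMetric y 0 0) = P 1 0 0 0 0 0 0 0 := by
  funext y; simp [nilMetric, P, Matrix.vecHead, Matrix.vecTail]; try ring
lemma mf01 : (fun y : Fin 3 → ℝ => nilMetric y 0 1) = P 0 0 0 0 0 0 0 0 := by
  funext y; simp [nilMetric, P, Matrix.vecHead, Matrix.vecTail]; try ring
lemma mf02 : (fun y : Fin 3 → ℝ => nilMetric y 0 2) = P 0 0 0 0 0 0 0 0 := by
  funext y; simp [nilMetric, P, Matrix.vecHead, Matrix.vecTail]; try ring
lemma mf10 : (fun y : Fin 3 → ℝ => nilMetric y 1 0) = P 0 0 0 0 0 0 0 0 := by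
  funext y; simp [nilMetric, P, Matrix.vecHead, Matrix.vecTail]; try ring
lemma mf11 : (fun y : Fin 3 → ℝ => nilMetric y 1 1) = P 1 0 0 0 1 0 0 0 := by
  funext y; simp [nilMetric, P, Matrix.vecHead, Matrix.vecTail]; try ring
lemma mf12 : (fun y : Fin 3 → ℝ => nilMetric y 1 2) = P 0 1 0 0 0 0 0 0 := by
  funext y; simp [nilMetric, P, Matrix.vecHead, Matrix.vecTail]; try ring
lemma mf20 : (fun y : Fin 3 → ℝ => nilMetric y 2 0) = P 0 0 0 0 0 0 0 0 := by
  funext y; simp [nilMetric, P, Matrix.vecHead, Matrix.vecTail]; try ring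
lemma mf21 : (fun y : Fin 3 → ℝ => nilMetric y 2 1) = P 0 1 0 0 0 0 0 0 := by
  funext y; simp [nilMetric, P, Matrix.vecHead, Matrix.vecTail]; try ring
lemma mf22 : (fun y : Fin 3 → ℝ => nilMetric y 2 2) = P 1 0 0 0 0 0 0 0 := by
  funext y; simp [nilMetric, P, Matrix.vecHead, Matrix.vecTail]; try ring

/-! ### Inverse metric -/

lemma ginv_nil (x : Fin 3 → ℝ) :
    ginv nilMetric x = Matrix.of fun i j =>
      !![1, 0, 0; 0, 1, -(x 0); 0, -(x 0), 1 + (x 0) ^ 2] i j := by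
  rw [ginv]
  apply Matrix.inv_eq_right_inv
  ext i j
  fin_cases i <;> fin_cases j <;>
    simp [nilMetric, Matrix.mul_apply, Fin.sum_univ_three, Matrix.vecHead,
      Matrix.vecTail] <;> ring

/-! ### Christoffel symbols: coefficients of their `P`-polynomial forms -/

def Ga : Fin 3 → Fin 3 → Fin 3 → ℝ := fun k i j =>
  ![!![0, 0, 0; 0, 0, -(1/2); 0, -(1/2), 0],
    !![0, 0, 1/2; 0, 0, 0; 1/2, 0, 0],
    !![0, 1/2, 0; 1/2, 0, 0; 0, 0, 0]] k i j

def Gb : Fin 3 → Fin 3 → Fin 3 → ℝ := fun k i j =>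
  ![!![0, 0, 0; 0, -1, 0; 0, 0, 0],
    !![0, 1/2, 0; 1/2, 0, 0; 0, 0, 0],
    !![0, 0, -(1/2); 0, 0, 0; -(1/2), 0, 0]] k i j

def Ge : Fin 3 → Fin 3 → Fin 3 → ℝ := fun k i j =>
  ![!![0, 0, 0; 0, 0, 0; 0, 0, 0],
    !![0, 0, 0; 0, 0, 0; 0, 0, 0],
    !![0, -(1/2), 0; -(1/2), 0, 0; 0, 0, 0]] k i j

lemma fin3cases (i : Fin 3) : i = 0 ∨ i = 1 ∨ i = 2 := by
  fin_cases i <;> simp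

lemma christoffel_eq (k i j : Fin 3) :
    christoffel nilMetric k i j = P (Ga k i j) (Gb k i j) 0 0 (Ge k i j) 0 0 0 := by
  rcases fin3cases k with rfl | rfl | rfl <;>
    rcases fin3cases i with rfl | rfl | rfl <;>
      rcases fin3cases j with rfl | rfl | rfl <;>
  · funext x
    simp only [christoffel, Fin.sum_univ_three, ginv_nil, Fin.isValue,
      mf00, mf01, mf02, mf10, mf11, mf12, mf20, mf21, mf22,
      pdP0, pdP1, pdP2]
    simp [P, Ga, Gb, Ge, Matrix.vecHead, Matrix.vecTail]
    try ring

/-! ### Flow entries as `P`-polynomials -/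

lemma ef0 : (fun y : Fin 3 → ℝ => nilFlow y 0) = P 0 (-1) 0 0 0 0 0 0 := by
  funext y; simp [nilFlow, P]; try ring
lemma ef1 : (fun y : Fin 3 → ℝ => nilFlow y 1) = P 0 0 (-1) 0 0 0 0 0 := by
  funext y; simp [nilFlow, P]; try ring
lemma ef2 : (fun y : Fin 3 → ℝ => nilFlow y 2) = P 0 0 0 (-2) 0 0 0 0 := by
  funext y; simp [nilFlow, P]; try ring

/-! ### The 1-form `E♭` as `P`-polynomials -/

lemma flat0 : flat nilMetric nilFlow 0 = P 0 (-1) 0 0 0 0 0 0 := by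
  funext x
  simp [flat, Fin.sum_univ_three, nilMetric, nilFlow, P, Matrix.vecHead, Matrix.vecTail]
lemma flat1 : flat nilMetric nilFlow 1 = P 0 0 (-1) 0 0 0 (-2) (-1) := by
  funext x
  simp [flat, Fin.sum_univ_three, nilMetric, nilFlow, P, Matrix.vecHead, Matrix.vecTail]
  try ring
lemma flat2 : flat nilMetric nilFlow 2 = P 0 0 0 (-2) 0 (-1) 0 0 := by
  funext x
  simp [flat, Fin.sum_univ_three, nilMetric, nilFlow, P, Matrix.vecHead, Matrix.vecTail]
  try ring

/-- Nil with the flow `E = −y₁∂₁ − y₂∂₂ − 2y₃∂₃` is an expanding Ricci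
soliton: `−2 Ricci(g) = L_E g + 2Ag` for some `A > 0`; moreover it is not of gradient type,
since `dE♭ = −2(y₁y₂+y₃) dy₁∧dy₂ − y₂ dy₁∧dy₃ + y₁ dy₂∧dy₃ ≠ 0`. -/
theorem nil_is_expanding_nongradient_soliton :
    (∃ A : ℝ, 0 < A ∧
      ∀ (x : Fin 3 → ℝ) (i j : Fin 3),
        -2 * ricci nilMetric i j x =
          lieD nilMetric nilFlow i j x + 2 * A * nilMetric x i j) ∧
    (∀ x : Fin 3 → ℝ,
      pd (flat nilMetric nilFlow 1) 0 x - pd (flat nilMetric nilFlow 0) 1 x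
          = -2 * (x 0 * x 1 + x 2) ∧
      pd (flat nilMetric nilFlow 2) 0 x - pd (flat nilMetric nilFlow 0) 2 x = -(x 1) ∧
      pd (flat nilMetric nilFlow 2) 1 x - pd (flat nilMetric nilFlow 1) 2 x = x 0) ∧
    ¬(∀ (x : Fin 3 → ℝ) (i j : Fin 3),
        pd (flat nilMetric nilFlow j) i x - pd (flat nilMetric nilFlow i) j x = 0) := by
  refine ⟨⟨3/2, by norm_num, ?_⟩, ?_, ?_⟩
  · intro x i j
    rcases fin3cases i with rfl | rfl | rfl <;> rcases fin3cases j with rfl | rfl | rfl <;>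
    · simp only [ricci, lieD, Fin.sum_univ_three, christoffel_eq,
        mf00, mf01, mf02, mf10, mf11, mf12, mf20, mf21, mf22, ef0, ef1, ef2,
        pdP0, pdP1, pdP2]
      simp [P, Ga, Gb, Ge, nilMetric, nilFlow, Matrix.vecHead, Matrix.vecTail]
      try ring
  · intro x
    refine ⟨?_, ?_, ?_⟩ <;>
    · simp only [flat0, flat1, flat2, pdP0, pdP1, pdP2]
      ring
  · intro H
    have h := H ![0, 1, 0] 0 2
    simp only [flat0, flat2, pdP0, pdP2] at h
    norm_num at h
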